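/- If B covers A in ASM order on 𝒜_n, then β(B) = β(A) + 1. -/

import Mathlib

/-- An alternating sign matrix: entries in {-1,0,1}, partial row/column sums in {0,1},
full row/column sums equal to 1. -/
def IsASM {n : ℕ} (A : Matrix (Fin n) (Fin n) ℤ) : Prop :=
  (∀ i j, A i j = -1 ∨ A i j = 0 ∨ A i j = 1) ∧
  (∀ i j, (∑ k ∈ Finset.Iic j, A i k) = 0 ∨ (∑ k ∈ Finset.Iic j, A i k) = 1) ∧
  (∀ i j, (∑ k ∈ Finset.Iic i, A k j) = 0 ∨ (∑ k ∈ Finset.Iic i, A k j) = 1) ∧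
  (∀ i, (∑ k, A i k) = 1) ∧
  (∀ j, (∑ k, A k j) = 1)

/-- Corner sum matrix. -/
def cornerSum {n : ℕ} (A : Matrix (Fin n) (Fin n) ℤ) (i j : Fin n) : ℤ :=
  ∑ p ∈ Finset.Iic i, ∑ q ∈ Finset.Iic j, A p q

/-- ASM order: `A ≤ B` iff corner sums of `A` dominate those of `B`. -/
def asmLE {n : ℕ} (A B : Matrix (Fin n) (Fin n) ℤ) : Prop :=
  ∀ i j, cornerSum B i j ≤ cornerSum A i j

def asmLT {n : ℕ} (A B : Matrix (Fin n) (Fin n) ℤ) : Prop :=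
  asmLE A B ∧ ¬ asmLE B A

/-- `B` covers `A` in the poset of ASMs of size `n`. -/
def asmCovers {n : ℕ} (A B : Matrix (Fin n) (Fin n) ℤ) : Prop :=
  asmLT A B ∧ ∀ C : Matrix (Fin n) (Fin n) ℤ, IsASM C → asmLT A C → ¬ asmLT C B

/-- `A` is join-irreducible: it covers exactly one element of the ASM poset. -/
def JoinIrred {n : ℕ} (A : Matrix (Fin n) (Fin n) ℤ) : Prop :=
  IsASM A ∧ ∃! C : Matrix (Fin n) (Fin n) ℤ, IsASM C ∧ asmCovers C A

/-- `β B` = number of join-irreducible ASMs weakly below `B`. -/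
noncomputable def asmBeta {n : ℕ} (B : Matrix (Fin n) (Fin n) ℤ) : ℕ :=
  Set.ncard {A : Matrix (Fin n) (Fin n) ℤ | JoinIrred A ∧ asmLE A B}

namespace ASMAux

variable {n : ℕ}

/-- entry of `A` with `ℕ` indices, `0` outside. -/
def ent (A : Matrix (Fin n) (Fin n) ℤ) (p q : ℕ) : ℤ :=
  if h : p < n ∧ q < n then A ⟨p, h.1⟩ ⟨q, h.2⟩ else 0

lemma ent_eq (A : Matrix (Fin n) (Fin n) ℤ) (p q : Fin n) : ent A p q = A p q := by
  simp [ent, p.isLt, q.isLt]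

/-- corner sums with `ℕ` indices. -/
def cs (A : Matrix (Fin n) (Fin n) ℤ) (i j : ℕ) : ℤ :=
  ∑ p ∈ Finset.range i, ∑ q ∈ Finset.range j, ent A p q

lemma cs_zero_right (A : Matrix (Fin n) (Fin n) ℤ) (i : ℕ) : cs A i 0 = 0 := by simp [cs]

lemma cs_zero_left (A : Matrix (Fin n) (Fin n) ℤ) (j : ℕ) : cs A 0 j = 0 := by simp [cs]

lemma cs_succ_left (A : Matrix (Fin n) (Fin n) ℤ) (i j : ℕ) :
    cs A (i+1) j = cs A i j + ∑ q ∈ Finset.range j, ent A i q := by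
  simp [cs, Finset.sum_range_succ]

lemma cs_succ_right (A : Matrix (Fin n) (Fin n) ℤ) (i j : ℕ) :
    cs A i (j+1) = cs A i j + ∑ p ∈ Finset.range i, ent A p j := by
  simp [cs, Finset.sum_range_succ, Finset.sum_add_distrib]

lemma sum_Iic_fin (f : ℕ → ℤ) (i : Fin n) :
    ∑ p ∈ Finset.Iic i, f p.val = ∑ p ∈ Finset.range (i.val+1), f p := by
  have h1 : Finset.range (i.val+1) = Finset.Iic i.val := by
    ext x; simp [Nat.lt_succ_iff]
  rw [h1, ← Fin.map_valEmbedding_Iic, Finset.sum_map]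
  rfl

lemma row_ps (A : Matrix (Fin n) (Fin n) ℤ) (i j : Fin n) :
    ∑ q ∈ Finset.range (j.val+1), ent A i q = ∑ k ∈ Finset.Iic j, A i k := by
  rw [← sum_Iic_fin (fun q => ent A i q) j]
  exact Finset.sum_congr rfl fun k _ => by rw [ent_eq]

lemma col_ps (A : Matrix (Fin n) (Fin n) ℤ) (i j : Fin n) :
    ∑ p ∈ Finset.range (i.val+1), ent A p j = ∑ k ∈ Finset.Iic i, A k j := by
  rw [← sum_Iic_fin (fun p => ent A p j) i]
  exact Finset.sum_congr rfl fun k _ => by rw [ent_eq]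

lemma row_full (A : Matrix (Fin n) (Fin n) ℤ) (i : Fin n) :
    ∑ q ∈ Finset.range n, ent A i q = ∑ k, A i k := by
  rw [← Fin.sum_univ_eq_sum_range (fun k => ent A i k) n]
  exact Finset.sum_congr rfl fun k _ => ent_eq A i k

end ASMAux

namespace ASMAux
variable {n : ℕ}

lemma col_full (A : Matrix (Fin n) (Fin n) ℤ) (j : Fin n) :
    ∑ p ∈ Finset.range n, ent A p j = ∑ k, A k j := by
  rw [← Fin.sum_univ_eq_sum_range (fun k => ent A k j) n]
  exact Finset.sum_congr rfl fun k _ => ent_eq A k j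

lemma cornerSum_eq_cs (A : Matrix (Fin n) (Fin n) ℤ) (i j : Fin n) :
    cornerSum A i j = cs A (i.val+1) (j.val+1) := by
  unfold cornerSum cs
  rw [← sum_Iic_fin (fun p => ∑ q ∈ Finset.range (j.val+1), ent A p q) i]
  refine Finset.sum_congr rfl fun p _ => ?_
  exact (row_ps A p j).symm

/-- validity of a corner-sum function. -/
def ValidCS (n : ℕ) (g : ℕ → ℕ → ℤ) : Prop :=
  (∀ j, g 0 j = 0) ∧ (∀ i, g i 0 = 0) ∧
  (∀ i j, i < n → j ≤ n → g i j ≤ g (i+1) j ∧ g (i+1) j ≤ g i j + 1) ∧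
  (∀ i j, i ≤ n → j < n → g i j ≤ g i (j+1) ∧ g i (j+1) ≤ g i j + 1) ∧
  (∀ i, i ≤ n → g i n = i) ∧ (∀ j, j ≤ n → g n j = j)

lemma validCS_cs {A : Matrix (Fin n) (Fin n) ℤ} (hA : IsASM A) : ValidCS n (cs A) := by
  obtain ⟨he, hrp, hcp, hrf, hcf⟩ := hA
  have hrown : ∀ i, i ≤ n → cs A i n = i := by
    intro i
    induction i with
    | zero => intro _; simp [cs_zero_left]
    | succ k ih =>
      intro hk
      rw [cs_succ_left, ih (by omega), row_full A ⟨k, by omega⟩, hrf]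
      push_cast; ring
  have hcoln : ∀ j, j ≤ n → cs A n j = j := by
    intro j
    induction j with
    | zero => intro _; simp [cs_zero_right]
    | succ k ih =>
      intro hk
      rw [cs_succ_right, ih (by omega), col_full A ⟨k, by omega⟩, hcf]
      push_cast; ring
  refine ⟨fun j => cs_zero_left A j, fun i => cs_zero_right A i, ?_, ?_, hrown, hcoln⟩
  · intro i j hi hj
    rw [cs_succ_left]
    rcases Nat.eq_zero_or_pos j with h0 | h0
    · subst h0; simp
    · obtain ⟨j', rfl⟩ : ∃ j', j = j' + 1 := ⟨j - 1, by omega⟩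
      have hj' : j' < n := by omega
      have heq : ∑ q ∈ Finset.range (j'+1), ent A i q
          = ∑ k ∈ Finset.Iic (⟨j', hj'⟩ : Fin n), A ⟨i, hi⟩ k := row_ps A ⟨i, hi⟩ ⟨j', hj'⟩
      rw [heq]
      rcases hrp ⟨i, hi⟩ ⟨j', hj'⟩ with h | h <;> rw [h] <;> omega
  · intro i j hi hj
    rw [cs_succ_right]
    rcases Nat.eq_zero_or_pos i with h0 | h0
    · subst h0; simp
    · obtain ⟨i', rfl⟩ : ∃ i', i = i' + 1 := ⟨i - 1, by omega⟩
      have hi' : i' < n := by omega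
      have heq : ∑ p ∈ Finset.range (i'+1), ent A p j
          = ∑ k ∈ Finset.Iic (⟨i', hi'⟩ : Fin n), A k ⟨j, hj⟩ := col_ps A ⟨i', hi'⟩ ⟨j, hj⟩
      rw [heq]
      rcases hcp ⟨i', hi'⟩ ⟨j, hj⟩ with h | h <;> rw [h] <;> omega

end ASMAux

namespace ASMAux
variable {n : ℕ}

/-- matrix reconstructed from a corner-sum function. -/
def mk (n : ℕ) (g : ℕ → ℕ → ℤ) : Matrix (Fin n) (Fin n) ℤ :=
  Matrix.of fun p q : Fin n =>
    g (p.val+1) (q.val+1) - g p.val (q.val+1) - g (p.val+1) q.val + g p.val q.val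

lemma mk_apply (g : ℕ → ℕ → ℤ) (p q : Fin n) :
    mk n g p q = g (p.val+1) (q.val+1) - g p.val (q.val+1) - g (p.val+1) q.val
      + g p.val q.val := rfl

lemma mk_row_tel (g : ℕ → ℕ → ℤ) (h0 : ∀ i, g i 0 = 0) (p : Fin n) (j : ℕ) (hj : j ≤ n) :
    ∑ q ∈ Finset.range j, ent (mk n g) p.val q = g (p.val+1) j - g p.val j := by
  have : ∀ q ∈ Finset.range j, ent (mk n g) p.val q
      = (fun m => g (p.val+1) m - g p.val m) (q+1) - (fun m => g (p.val+1) m - g p.val m) q := by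
    intro q hq
    have hq' : q < n := lt_of_lt_of_le (Finset.mem_range.1 hq) hj
    rw [show ent (mk n g) p.val q = mk n g p ⟨q, hq'⟩ from by simp [ent, p.isLt, hq'],
      mk_apply]
    simp only
    ring
  rw [Finset.sum_congr rfl this, Finset.sum_range_sub (fun m => g (p.val+1) m - g p.val m) j]
  simp [h0]

lemma cs_mk (g : ℕ → ℕ → ℤ) (h0 : ∀ i, g i 0 = 0) (h0' : ∀ j, g 0 j = 0)
    {i j : ℕ} (hi : i ≤ n) (hj : j ≤ n) : cs (mk n g) i j = g i j := by
  unfold cs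
  have : ∀ p ∈ Finset.range i, ∑ q ∈ Finset.range j, ent (mk n g) p q
      = (fun m => g m j) (p+1) - (fun m => g m j) p := by
    intro p hp
    have hp' : p < n := lt_of_lt_of_le (Finset.mem_range.1 hp) hi
    exact mk_row_tel g h0 ⟨p, hp'⟩ j hj
  rw [Finset.sum_congr rfl this, Finset.sum_range_sub (fun m => g m j) i]
  simp [h0']

lemma mk_cs (A : Matrix (Fin n) (Fin n) ℤ) : mk n (cs A) = A := by
  funext p q
  rw [mk_apply, cs_succ_left, cs_succ_left, Finset.sum_range_succ, ent_eq]
  ring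

end ASMAux

namespace ASMAux
variable {n : ℕ}

lemma mk_col_tel (g : ℕ → ℕ → ℤ) (h0' : ∀ j, g 0 j = 0) (q : Fin n) (i : ℕ) (hi : i ≤ n) :
    ∑ p ∈ Finset.range i, ent (mk n g) p q.val = g i (q.val+1) - g i q.val := by
  have : ∀ p ∈ Finset.range i, ent (mk n g) p q.val
      = (fun m => g m (q.val+1) - g m q.val) (p+1) - (fun m => g m (q.val+1) - g m q.val) p := by
    intro p hp
    have hp' : p < n := lt_of_lt_of_le (Finset.mem_range.1 hp) hi
    rw [show ent (mk n g) p q.val = mk n g ⟨p, hp'⟩ q from by simp [ent, q.isLt, hp'],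
      mk_apply]
    simp only
    ring
  rw [Finset.sum_congr rfl this, Finset.sum_range_sub (fun m => g m (q.val+1) - g m q.val) i]
  simp [h0']

lemma isASM_mk {g : ℕ → ℕ → ℤ} (hg : ValidCS n g) : IsASM (mk n g) := by
  obtain ⟨h0', h0, hv, hh, hrn, hcn⟩ := hg
  refine ⟨?_, ?_, ?_, ?_, ?_⟩
  · intro p q
    rw [mk_apply]
    have a1 := hh (p.val+1) q.val (by omega) q.isLt
    have a2 := hh p.val q.val (by omega) q.isLt
    omega
  · intro p j
    have := row_ps (mk n g) p j
    rw [← this, mk_row_tel g h0 p (j.val+1) (by omega)]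
    have a1 := hv p.val (j.val+1) p.isLt (by omega)
    omega
  · intro i q
    have := col_ps (mk n g) i q
    rw [← this, mk_col_tel g h0' q (i.val+1) (by omega)]
    have a1 := hh (i.val+1) q.val (by omega) q.isLt
    omega
  · intro p
    rw [← row_full (mk n g) p, mk_row_tel g h0 p n le_rfl, hrn (p.val+1) (by omega),
      hrn p.val (by omega)]
    push_cast; ring
  · intro q
    rw [← col_full (mk n g) q, mk_col_tel g h0' q n le_rfl, hcn (q.val+1) (by omega),
      hcn q.val (by omega)]
    push_cast; ring

lemma validCS_min {g g' : ℕ → ℕ → ℤ} (hg : ValidCS n g) (hg' : ValidCS n g') :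
    ValidCS n (fun i j => min (g i j) (g' i j)) := by
  obtain ⟨a1, a2, a3, a4, a5, a6⟩ := hg
  obtain ⟨b1, b2, b3, b4, b5, b6⟩ := hg'
  refine ⟨?_, ?_, ?_, ?_, ?_, ?_⟩
  · intro j; simp [a1, b1]
  · intro i; simp [a2, b2]
  · intro i j hi hj; dsimp only; have := a3 i j hi hj; have := b3 i j hi hj; omega
  · intro i j hi hj; dsimp only; have := a4 i j hi hj; have := b4 i j hi hj; omega
  · intro i hi; simp [a5 i hi, b5 i hi]
  · intro j hj; simp [a6 j hj, b6 j hj]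

lemma validCS_max {g g' : ℕ → ℕ → ℤ} (hg : ValidCS n g) (hg' : ValidCS n g') :
    ValidCS n (fun i j => max (g i j) (g' i j)) := by
  obtain ⟨a1, a2, a3, a4, a5, a6⟩ := hg
  obtain ⟨b1, b2, b3, b4, b5, b6⟩ := hg'
  refine ⟨?_, ?_, ?_, ?_, ?_, ?_⟩
  · intro j; simp [a1, b1]
  · intro i; simp [a2, b2]
  · intro i j hi hj; dsimp only; have := a3 i j hi hj; have := b3 i j hi hj; omega
  · intro i j hi hj; dsimp only; have := a4 i j hi hj; have := b4 i j hi hj; omega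
  · intro i hi; simp [a5 i hi, b5 i hi]
  · intro j hj; simp [a6 j hj, b6 j hj]

end ASMAux

namespace ASMAux
variable {n : ℕ}

lemma eq_of_cornerSum_eq {A B : Matrix (Fin n) (Fin n) ℤ}
    (h : ∀ i j : Fin n, cornerSum A i j = cornerSum B i j) : A = B := by
  have hcs : ∀ i j : ℕ, i ≤ n → j ≤ n → cs A i j = cs B i j := by
    intro i j hi hj
    match i, j with
    | 0, j => rw [cs_zero_left, cs_zero_left]
    | i+1, 0 => rw [cs_zero_right, cs_zero_right]
    | i+1, j+1 =>
      have hi' : i < n := by omega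
      have hj' : j < n := by omega
      have := h ⟨i, hi'⟩ ⟨j, hj'⟩
      rwa [cornerSum_eq_cs, cornerSum_eq_cs] at this
  rw [← mk_cs A, ← mk_cs B]
  funext p q
  rw [mk_apply, mk_apply,
    hcs _ _ (by omega) (by omega), hcs _ _ (by omega) (by omega),
    hcs _ _ (by omega) (by omega), hcs _ _ (by omega) (by omega)]

/-- join (in ASM order) of two ASMs: pointwise min of corner sums. -/
def supM (A B : Matrix (Fin n) (Fin n) ℤ) : Matrix (Fin n) (Fin n) ℤ :=
  mk n (fun i j => min (cs A i j) (cs B i j))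

def infM (A B : Matrix (Fin n) (Fin n) ℤ) : Matrix (Fin n) (Fin n) ℤ :=
  mk n (fun i j => max (cs A i j) (cs B i j))

lemma isASM_supM {A B : Matrix (Fin n) (Fin n) ℤ} (hA : IsASM A) (hB : IsASM B) :
    IsASM (supM A B) :=
  isASM_mk (validCS_min (validCS_cs hA) (validCS_cs hB))

lemma isASM_infM {A B : Matrix (Fin n) (Fin n) ℤ} (hA : IsASM A) (hB : IsASM B) :
    IsASM (infM A B) :=
  isASM_mk (validCS_max (validCS_cs hA) (validCS_cs hB))

lemma cornerSum_supM (A B : Matrix (Fin n) (Fin n) ℤ) (i j : Fin n) :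
    cornerSum (supM A B) i j = min (cornerSum A i j) (cornerSum B i j) := by
  rw [cornerSum_eq_cs, cornerSum_eq_cs, cornerSum_eq_cs]
  exact cs_mk _ (fun i => by simp [cs_zero_right]) (fun j => by simp [cs_zero_left])
    (by omega) (by omega)

lemma cornerSum_infM (A B : Matrix (Fin n) (Fin n) ℤ) (i j : Fin n) :
    cornerSum (infM A B) i j = max (cornerSum A i j) (cornerSum B i j) := by
  rw [cornerSum_eq_cs, cornerSum_eq_cs, cornerSum_eq_cs]
  exact cs_mk _ (fun i => by simp [cs_zero_right]) (fun j => by simp [cs_zero_left])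
    (by omega) (by omega)

lemma finite_isASM : {A : Matrix (Fin n) (Fin n) ℤ | IsASM A}.Finite := by
  have hfin : (Set.pi (Set.univ : Set (Fin n))
      (fun _ => Set.pi (Set.univ : Set (Fin n)) (fun _ => ({-1, 0, 1} : Set ℤ)))).Finite := by
    apply Set.Finite.pi
    intro i
    apply Set.Finite.pi
    intro j
    exact (Set.finite_singleton (1:ℤ)).insert 0 |>.insert (-1)
  apply hfin.subset
  intro A hA
  intro i _ j _
  rcases hA.1 i j with h | h | h <;> simp [h]

end ASMAux

/-- The type of ASMs of size `n`. -/
def ASMT (n : ℕ) := {A : Matrix (Fin n) (Fin n) ℤ // IsASM A}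

namespace ASMT
open ASMAux
variable {n : ℕ}

instance : DistribLattice (ASMT n) where
  le a b := asmLE a.1 b.1
  lt a b := asmLT a.1 b.1
  lt_iff_le_not_ge _ _ := Iff.rfl
  le_refl _ := fun _ _ => le_rfl
  le_trans _ _ _ hab hbc := fun i j => le_trans (hbc i j) (hab i j)
  le_antisymm a b hab hba := Subtype.ext (eq_of_cornerSum_eq fun i j =>
    le_antisymm (hba i j) (hab i j))
  sup a b := ⟨supM a.1 b.1, isASM_supM a.2 b.2⟩
  le_sup_left a b := by
    show asmLE a.1 (supM a.1 b.1)
    intro i j; rw [cornerSum_supM]; exact min_le_left _ _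
  le_sup_right a b := by
    show asmLE b.1 (supM a.1 b.1)
    intro i j; rw [cornerSum_supM]; exact min_le_right _ _
  sup_le a b c hac hbc := by
    show asmLE (supM a.1 b.1) c.1
    intro i j; rw [cornerSum_supM]; exact le_min (hac i j) (hbc i j)
  inf a b := ⟨infM a.1 b.1, isASM_infM a.2 b.2⟩
  inf_le_left a b := by
    show asmLE (infM a.1 b.1) a.1
    intro i j; rw [cornerSum_infM]; exact le_max_left _ _
  inf_le_right a b := by
    show asmLE (infM a.1 b.1) b.1
    intro i j; rw [cornerSum_infM]; exact le_max_right _ _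
  le_inf a b c hab hac := by
    show asmLE a.1 (infM b.1 c.1)
    intro i j; rw [cornerSum_infM]; exact max_le (hab i j) (hac i j)
  le_sup_inf a b c := by
    show asmLE (infM (supM a.1 b.1) (supM a.1 c.1)) (supM a.1 (infM b.1 c.1))
    intro i j
    rw [cornerSum_supM, cornerSum_infM, cornerSum_infM, cornerSum_supM, cornerSum_supM]
    omega

lemma le_def {a b : ASMT n} : a ≤ b ↔ asmLE a.1 b.1 := Iff.rfl

lemma lt_def {a b : ASMT n} : a < b ↔ asmLT a.1 b.1 := Iff.rfl

instance : Finite (ASMT n) := finite_isASM.to_subtype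

end ASMT

section AbstractLattice

variable {α : Type*}

lemma isMin_le [SemilatticeInf α] {a b : α} (ha : IsMin a) : a ≤ b :=
  le_trans (ha (inf_le_left : a ⊓ b ≤ a)) inf_le_right

lemma le_of_supIrred_le [Lattice α] [Finite α] (b : α) :
    ∀ a : α, (∀ j : α, SupIrred j → j ≤ a → j ≤ b) → a ≤ b := by
  have hwf : WellFounded ((· < ·) : α → α → Prop) := wellFounded_lt
  intro a
  refine hwf.induction (C := fun a => (∀ j : α, SupIrred j → j ≤ a → j ≤ b) → a ≤ b) a ?_
  intro x IH hx
  by_cases hmin : IsMin x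
  · exact isMin_le hmin
  by_cases hirr : SupIrred x
  · exact hx x hirr le_rfl
  · rw [SupIrred] at hirr
    push_neg at hirr
    obtain ⟨c, d, hcd, hc, hd⟩ := hirr hmin
    have hcx : c < x := lt_of_le_of_ne (hcd ▸ le_sup_left) hc
    have hdx : d < x := lt_of_le_of_ne (hcd ▸ le_sup_right) hd
    have hcb : c ≤ b := IH c hcx (fun j hj hjc => hx j hj (le_trans hjc hcx.le))
    have hdb : d ≤ b := IH d hdx (fun j hj hjd => hx j hj (le_trans hjd hdx.le))
    exact hcd ▸ sup_le hcb hdb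

lemma supIrred_iff_unique_covBy [Lattice α] [Finite α] {a : α} :
    SupIrred a ↔ ∃! c : α, c ⋖ a := by
  constructor
  · intro ha
    obtain ⟨c, hc⟩ := not_isMin_iff.1 ha.1
    obtain ⟨m, hcm, hma⟩ := exists_le_covBy_of_lt hc
    refine ⟨m, hma, ?_⟩
    intro c1 hc1
    by_contra hne
    have hsub : c1 ⊔ m = a := by
      rcases lt_or_eq_of_le (sup_le hc1.lt.le hma.lt.le) with hlt | he
      · by_cases hle : c1 ⊔ m ≤ c1
        · have : m ≤ c1 := le_trans le_sup_right hle
          rcases this.lt_or_eq with h' | h'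
          · exact absurd hc1.lt (hma.2 h')
          · exact absurd (h' ▸ rfl) hne
        · exact absurd hlt (hc1.2 (lt_of_le_not_ge le_sup_left hle))
      · exact he
    rcases ha.2 hsub with h | h
    · exact absurd (h ▸ hc1.lt) (lt_irrefl a)
    · exact absurd (h ▸ hma.lt) (lt_irrefl a)
  · rintro ⟨c0, hc0, huniq⟩
    constructor
    · intro hmin
      exact absurd (hmin hc0.lt.le) (not_le_of_gt hc0.lt)
    · intro b c hbc
      by_contra hne
      push_neg at hne
      obtain ⟨hb, hc⟩ := hne
      have hba : b < a := lt_of_le_of_ne (hbc ▸ le_sup_left) hb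
      have hca : c < a := lt_of_le_of_ne (hbc ▸ le_sup_right) hc
      obtain ⟨mb, hbmb, hmba⟩ := exists_le_covBy_of_lt hba
      obtain ⟨mc, hcmc, hmca⟩ := exists_le_covBy_of_lt hca
      have h1 : mb = c0 := huniq mb hmba
      have h2 : mc = c0 := huniq mc hmca
      have : a ≤ c0 := hbc ▸ sup_le (h1 ▸ hbmb) (h2 ▸ hcmc)
      exact absurd (lt_of_lt_of_le hc0.lt this) (lt_irrefl c0)

theorem ncard_supIrred_covBy [DistribLattice α] [Finite α] {a b : α} (h : a ⋖ b) :
    {j : α | SupIrred j ∧ j ≤ b}.ncard = {j : α | SupIrred j ∧ j ≤ a}.ncard + 1 := by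
  have hnew : ∃ j : α, SupIrred j ∧ j ≤ b ∧ ¬ j ≤ a := by
    by_contra h'
    push_neg at h'
    have : b ≤ a := le_of_supIrred_le a b (fun j hj hjb => h' j hj hjb)
    exact absurd (lt_of_lt_of_le h.lt this) (lt_irrefl a)
  obtain ⟨j0, hj0irr, hj0b, hj0a⟩ := hnew
  have hsup : ∀ j : α, SupIrred j → j ≤ b → ¬ j ≤ a → a ⊔ j = b := by
    intro j _ hjb hja
    rcases lt_or_eq_of_le (sup_le h.lt.le hjb) with hlt | he
    · have : a < a ⊔ j := lt_of_le_not_ge le_sup_left (fun hle => hja (le_trans le_sup_right hle))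
      exact absurd hlt (h.2 this)
    · exact he
  have huniq : ∀ j : α, SupIrred j → j ≤ b → ¬ j ≤ a → j = j0 := by
    intro j hjirr hjb hja
    have key : ∀ j j' : α, SupIrred j → j ≤ b → ¬ j ≤ a → SupIrred j' → j' ≤ b → ¬ j' ≤ a →
        j ≤ j' := by
      intro j j' hjirr hjb hja hj'irr hj'b hj'a
      have hb' : a ⊔ j' = b := hsup j' hj'irr hj'b hj'a
      have : j ⊓ (a ⊔ j') = j := inf_eq_left.2 (hb' ▸ hjb)
      rw [inf_sup_left] at this
      rcases hjirr.2 this with h' | h'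
      · exact absurd (h' ▸ inf_le_right : j ≤ a) hja
      · exact h' ▸ inf_le_right
    exact le_antisymm (key j j0 hjirr hjb hja hj0irr hj0b hj0a)
      (key j0 j hj0irr hj0b hj0a hjirr hjb hja)
  have hset : {j : α | SupIrred j ∧ j ≤ b} = insert j0 {j : α | SupIrred j ∧ j ≤ a} := by
    ext x
    simp only [Set.mem_setOf_eq, Set.mem_insert_iff]
    constructor
    · rintro ⟨hxirr, hxb⟩
      by_cases hxa : x ≤ a
      · exact Or.inr ⟨hxirr, hxa⟩
      · exact Or.inl (huniq x hxirr hxb hxa)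
    · rintro (rfl | ⟨hxirr, hxa⟩)
      · exact ⟨hj0irr, hj0b⟩
      · exact ⟨hxirr, le_trans hxa h.lt.le⟩
  rw [hset, Set.ncard_insert_of_notMem (fun hmem => hj0a hmem.2) (Set.toFinite _)]

end AbstractLattice


/-- package a matrix with its ASM proof as an element of `ASMT n`. -/
def ASMT.mkT {n : ℕ} (A : Matrix (Fin n) (Fin n) ℤ) (hA : IsASM A) : ASMT n := ⟨A, hA⟩

namespace ASMT
variable {n : ℕ}

lemma mkT_val {A : Matrix (Fin n) (Fin n) ℤ} (hA : IsASM A) : (mkT A hA).1 = A := rfl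

lemma mkT_eta (x : ASMT n) : mkT x.1 x.2 = x := rfl

set_option maxHeartbeats 1000000 in

lemma covers_iff {A B : Matrix (Fin n) (Fin n) ℤ} (hA : IsASM A) (hB : IsASM B) :
    asmCovers A B ↔ mkT A hA ⋖ mkT B hB :=
  Iff.intro
    (fun h => And.intro h.1 (fun c hc1 hc2 => h.2 c.1 c.2 hc1 hc2))
    (fun h => And.intro (And.left h)
      (fun C hC hc1 hc2 => (And.right h) (c := mkT C hC) hc1 hc2))

lemma joinIrred_iff {A : Matrix (Fin n) (Fin n) ℤ} (hA : IsASM A) :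
    JoinIrred A ↔ SupIrred (mkT A hA) := by
  rw [supIrred_iff_unique_covBy]
  constructor
  · intro h
    obtain ⟨C, hC, huniq⟩ := h.2
    refine ⟨mkT C hC.1, (covers_iff hC.1 hA).1 hC.2, ?_⟩
    intro d hd
    exact Subtype.ext (huniq d.1 ⟨d.2, (covers_iff d.2 hA).2 hd⟩)
  · intro h
    obtain ⟨c, hc, huniq⟩ := h
    refine ⟨hA, c.1, ⟨c.2, (covers_iff c.2 hA).2 hc⟩, ?_⟩
    intro D hD
    exact congrArg Subtype.val (huniq (mkT D hD.1) ((covers_iff hD.1 hA).1 hD.2))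

lemma beta_eq {B : Matrix (Fin n) (Fin n) ℤ} (hB : IsASM B) :
    asmBeta B = {x : ASMT n | SupIrred x ∧ x ≤ mkT B hB}.ncard := by
  have hset : {A : Matrix (Fin n) (Fin n) ℤ | JoinIrred A ∧ asmLE A B}
      = (fun x : ASMT n => x.1) '' {x : ASMT n | SupIrred x ∧ x ≤ mkT B hB} := by
    ext X
    simp only [Set.mem_setOf_eq, Set.mem_image]
    constructor
    · intro hX
      exact ⟨mkT X hX.1.1, ⟨(joinIrred_iff hX.1.1).1 hX.1, hX.2⟩, rfl⟩
    · intro hX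
      obtain ⟨x, ⟨hirr, hle⟩, heq⟩ := hX
      subst heq
      exact ⟨(joinIrred_iff x.2).2 hirr, hle⟩
  have hinj : Function.Injective (fun x : ASMT n => x.1) := fun x y hxy => Subtype.ext hxy
  rw [asmBeta, hset, Set.ncard_image_of_injective _ hinj]

end ASMT


theorem asmBeta_of_covers {n : ℕ} (A B : Matrix (Fin n) (Fin n) ℤ)
    (hA : IsASM A) (hB : IsASM B) (h : asmCovers A B) :
    asmBeta B = asmBeta A + 1 := by
  rw [ASMT.beta_eq hB, ASMT.beta_eq hA]
  exact ncard_supIrred_covBy ((ASMT.covers_iff hA hB).1 h)
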